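/- Conversely, if a sequence (U_n)_{n≥1} of positive integers satisfies (U*μ)(n) ≥ 0 and n | (U*μ)(n) for all n ≥ 1, then (U_n) is realizable: there exist a set X and T : X → X with U_n = #{x : T^n(x) = x} for all n ≥ 1. -/

import Mathlib

open ArithmeticFunction ArithmeticFunction.Moebius

/-- number of cycles of length n -/
noncomputable def cycCnt (U : ℕ → ℕ) (n : ℕ) : ℕ :=
  ((∑ d ∈ n.divisors, (μ (n / d) : ℤ) * (U d : ℤ)) / n).toNat

@[reducible] noncomputable def cycSp (U : ℕ → ℕ) : Type :=
  Σ k : ℕ, Fin (cycCnt U (k + 1)) × ZMod (k + 1)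

noncomputable def cycT (U : ℕ → ℕ) : cycSp U → cycSp U :=
  fun x => ⟨x.1, x.2.1, x.2.2 + 1⟩

lemma cycT_iter (U : ℕ → ℕ) (n : ℕ) (x : cycSp U) :
    (cycT U)^[n] x = ⟨x.1, x.2.1, x.2.2 + (n : ZMod (x.1 + 1))⟩ := by
  induction n with
  | zero => simp
  | succ n ih =>
    rw [Function.iterate_succ_apply', ih, cycT]
    simp [add_assoc]

open ArithmeticFunction ArithmeticFunction.Moebius in
theorem realizable_of_moebius_conditions (U : ℕ → ℕ)
    (hpos : ∀ n : ℕ, 1 ≤ n → 0 < U n)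
    (hnonneg : ∀ n : ℕ, 1 ≤ n →
      0 ≤ ∑ d ∈ n.divisors, (μ (n / d) : ℤ) * (U d : ℤ))
    (hdvd : ∀ n : ℕ, 1 ≤ n →
      (n : ℤ) ∣ ∑ d ∈ n.divisors, (μ (n / d) : ℤ) * (U d : ℤ)) :
    ∃ (X : Type) (T : X → X), ∀ n : ℕ, 1 ≤ n →
      ∃ s : Finset X, (∀ x : X, T^[n] x = x ↔ x ∈ s) ∧ s.card = U n := by
  -- key identity: (cycCnt U d) * d = (U*μ)(d) for d ≥ 1
  have key : ∀ d : ℕ, 1 ≤ d →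
      (cycCnt U d : ℤ) * d = ∑ e ∈ d.divisors, (μ (d / e) : ℤ) * (U e : ℤ) := by
    intro d hd
    have hdvd' := hdvd d hd
    have hnn := hnonneg d hd
    have hdpos : (0 : ℤ) < d := by exact_mod_cast hd
    rw [cycCnt, Int.toNat_of_nonneg (Int.ediv_nonneg hnn hdpos.le)]
    exact Int.ediv_mul_cancel hdvd'
  -- Möbius inversion: ∑_{d|n} (U*μ)(d) = U n
  have inv : ∀ n > 0, ∑ d ∈ n.divisors,
      (∑ e ∈ d.divisors, (μ (d / e) : ℤ) * (U e : ℤ)) = (U n : ℤ) := by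
    rw [sum_eq_iff_sum_mul_moebius_eq]
    intro n hn
    rw [← Nat.sum_divisorsAntidiagonal' (f := fun a b => (μ a : ℤ) * (U b : ℤ))]
    rfl
  refine ⟨cycSp U, cycT U, fun n hn => ?_⟩
  refine ⟨(n.divisors.image (· - 1)).sigma (fun _ => Finset.univ), fun x => ?_, ?_⟩
  · -- membership characterization
    obtain ⟨k, i, z⟩ := x
    rw [cycT_iter]
    constructor
    · intro h
      rw [Sigma.mk.inj_iff] at h
      have h2 : z + (n : ZMod (k + 1)) = z := (Prod.mk.injEq .. ▸ eq_of_heq h.2).2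
      have hn0 : (n : ZMod (k + 1)) = 0 := by
        have : z + (n : ZMod (k + 1)) = z + 0 := by rw [add_zero]; exact h2
        exact add_left_cancel this
      rw [ZMod.natCast_eq_zero_iff] at hn0
      apply Finset.mem_sigma.mpr
      refine ⟨Finset.mem_image.mpr ⟨k + 1, Nat.mem_divisors.mpr ⟨hn0, by omega⟩, by omega⟩,
        Finset.mem_univ _⟩
    · intro h
      obtain ⟨h1, -⟩ := Finset.mem_sigma.mp h
      obtain ⟨d, hd, hd1⟩ := Finset.mem_image.mp h1
      obtain ⟨hdd, -⟩ := Nat.mem_divisors.mp hd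
      have hd0 : 1 ≤ d := Nat.pos_of_mem_divisors hd
      simp only at hd1
      have hkd : k + 1 = d := by omega
      have hn0 : (n : ZMod (k + 1)) = 0 :=
        (ZMod.natCast_eq_zero_iff _ _).mpr (hkd ▸ hdd)
      rw [hn0, add_zero]
  · -- cardinality
    rw [Finset.card_sigma]
    have hinj : Set.InjOn (· - 1) n.divisors := by
      intro a ha b hb hab
      have ha1 := Nat.pos_of_mem_divisors ha
      have hb1 := Nat.pos_of_mem_divisors hb
      simp only at hab; omega
    rw [Finset.sum_image hinj]
    have : ∀ d ∈ n.divisors,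
        (Finset.univ : Finset (Fin (cycCnt U (d - 1 + 1)) × ZMod (d - 1 + 1))).card
          = cycCnt U d * d := by
      intro d hd
      have hd1 : d - 1 + 1 = d := by have := Nat.pos_of_mem_divisors hd; omega
      rw [Finset.card_univ, Fintype.card_prod, Fintype.card_fin, ZMod.card, hd1]
    rw [Finset.sum_congr rfl this]
    have := inv n hn
    have hz : (∑ d ∈ n.divisors, cycCnt U d * d : ℤ) = (U n : ℤ) := by
      rw [← this]
      refine Finset.sum_congr rfl fun d hd => ?_
      exact_mod_cast key d (Nat.pos_of_mem_divisors hd)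
    exact_mod_cast hz
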